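/- Let B ⊆ (0, ∞) be an infinite set that is linearly independent over ℚ, and let H := { q₁·b₁ + ⋯ + q_m·b_m : m ≥ 1, qᵢ ∈ ℚ with qᵢ > 0, bᵢ ∈ B } be the positive rational cone generated by B. Then there exists a bijection f : H → H such that f(x + y) ≤ f(x) + f(y) for all x, y ∈ H, and such that liminf_{x → 0, x ∈ H} f(x) = 0 and limsup_{x → 0, x ∈ H} f(x) = 1. -/

import Mathlib

open Filter Topology

private lemma zero_comb {B : Set ℝ} (hBind : LinearIndependent ℚ ((↑) : B → ℝ))
    (u : Finset ℝ) (hu : ↑u ⊆ B) (e : ℝ → ℚ)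
    (h : ∑ x ∈ u, (e x : ℝ) * x = 0) : ∀ x ∈ u, e x = 0 := by
  classical
  have key := linearIndependent_iff'.mp hBind (u.subtype (· ∈ B)) (fun i => e ↑i) ?h0
  · intro x hx
    exact key ⟨x, hu hx⟩ (Finset.mem_subtype.mpr hx)
  case h0 =>
    simp only [Rat.smul_def]
    rw [Finset.sum_subtype_of_mem (fun z => ((e z : ℝ)) * z) (fun x hx => hu hx)]
    exact h

private lemma rep_unique {B : Set ℝ} (hBind : LinearIndependent ℚ ((↑) : B → ℝ))
    {s t : Finset ℝ} (hs : ↑s ⊆ B) (ht : ↑t ⊆ B)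
    {c d : ℝ → ℚ} (hc : ∀ x ∈ s, 0 < c x) (hd : ∀ x ∈ t, 0 < d x)
    (h : ∑ x ∈ s, (c x : ℝ) * x = ∑ x ∈ t, (d x : ℝ) * x) :
    s = t ∧ ∀ x ∈ s, c x = d x := by
  classical
  have hz : ∀ x ∈ s ∪ t, ((if x ∈ s then c x else 0) - (if x ∈ t then d x else 0)) = 0 := by
    apply zero_comb hBind (s ∪ t)
    · rw [Finset.coe_union]; exact Set.union_subset hs ht
    · have h1 : ∀ x ∈ s ∪ t,
          ((((if x ∈ s then c x else 0) - (if x ∈ t then d x else 0) : ℚ)) : ℝ) * x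
          = (if x ∈ s then (c x : ℝ) * x else 0) - (if x ∈ t then (d x : ℝ) * x else 0) := by
        intro x _
        by_cases h1 : x ∈ s <;> by_cases h2 : x ∈ t <;>
          simp [h1, h2, sub_mul] <;> push_cast <;> ring
      rw [Finset.sum_congr rfl h1, Finset.sum_sub_distrib,
          Finset.sum_ite_mem, Finset.sum_ite_mem,
          Finset.union_inter_cancel_left, Finset.union_inter_cancel_right, h, sub_self]
  have hss : ∀ x ∈ s, x ∈ t := by
    intro x hx
    by_contra hxt
    have := hz x (Finset.mem_union_left _ hx)
    simp only [if_pos hx, if_neg hxt, sub_zero] at this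
    exact (hc x hx).ne' this
  have hts : ∀ x ∈ t, x ∈ s := by
    intro x hx
    by_contra hxs
    have := hz x (Finset.mem_union_right _ hx)
    simp only [if_neg hxs, if_pos hx, zero_sub, neg_eq_zero] at this
    exact (hd x hx).ne' this
  have hst : s = t := Finset.Subset.antisymm hss hts
  refine ⟨hst, fun x hx => ?_⟩
  have hxt : x ∈ t := hss x hx
  have := hz x (Finset.mem_union_left _ hx)
  simp only [if_pos hx, if_pos hxt] at this
  exact sub_eq_zero.mp this

private lemma ray_unique {B : Set ℝ} (hBind : LinearIndependent ℚ ((↑) : B → ℝ))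
    {u v : ℝ} (hu : u ∈ B) (hv : v ∈ B) {q p : ℚ} (hq : 0 < q) (hp : 0 < p)
    (h : (q : ℝ) * u = (p : ℝ) * v) : u = v ∧ q = p := by
  classical
  have h' : ∑ x ∈ ({u} : Finset ℝ), ((fun _ => q) x : ℝ) * x
      = ∑ x ∈ ({v} : Finset ℝ), ((fun _ => p) x : ℝ) * x := by simpa using h
  obtain ⟨hst, hco⟩ := rep_unique hBind (by simpa using hu) (by simpa using hv)
      (fun x _ => hq) (fun x _ => hp) h'
  have huv : u = v := Finset.singleton_injective hst
  exact ⟨huv, hco u (Finset.mem_singleton_self u)⟩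

private lemma sum_ray {B : Set ℝ} (hBind : LinearIndependent ℚ ((↑) : B → ℝ)) {x y : ℝ}
    (hx : ∃ s : Finset ℝ, ↑s ⊆ B ∧ s.Nonempty ∧
      ∃ c : ℝ → ℚ, (∀ b ∈ s, 0 < c b) ∧ x = ∑ b ∈ s, (c b : ℝ) * b)
    (hy : ∃ s : Finset ℝ, ↑s ⊆ B ∧ s.Nonempty ∧
      ∃ c : ℝ → ℚ, (∀ b ∈ s, 0 < c b) ∧ y = ∑ b ∈ s, (c b : ℝ) * b)
    {u : ℝ} (hu : u ∈ B) {p : ℚ} (hp : 0 < p) (hxy : x + y = (p : ℝ) * u) :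
    ∃ qx qy : ℚ, 0 < qx ∧ 0 < qy ∧ qx + qy = p ∧ x = (qx : ℝ) * u ∧ y = (qy : ℝ) * u := by
  classical
  obtain ⟨s, hsB, hsne, cs, hcs, hxe⟩ := hx
  obtain ⟨t, htB, htne, ct, hct, hye⟩ := hy
  have hepos : ∀ z ∈ s ∪ t, 0 < (if z ∈ s then cs z else 0) + (if z ∈ t then ct z else 0) := by
    intro z hz
    rcases Finset.mem_union.mp hz with h | h
    · have h1 : (0:ℚ) < if z ∈ s then cs z else 0 := by simp [h, hcs z h]
      have h2 : (0:ℚ) ≤ if z ∈ t then ct z else 0 := by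
        split_ifs with h'
        exacts [(hct z h').le, le_refl 0]
      linarith
    · have h1 : (0:ℚ) < if z ∈ t then ct z else 0 := by simp [h, hct z h]
      have h2 : (0:ℚ) ≤ if z ∈ s then cs z else 0 := by
        split_ifs with h'
        exacts [(hcs z h').le, le_refl 0]
      linarith
  have hsum : ∑ z ∈ s ∪ t,
      (((if z ∈ s then cs z else 0) + (if z ∈ t then ct z else 0) : ℚ) : ℝ) * z
      = ∑ z ∈ ({u} : Finset ℝ), ((fun _ => p) z : ℝ) * z := by
    have h1 : ∀ z ∈ s ∪ t,
        (((if z ∈ s then cs z else 0) + (if z ∈ t then ct z else 0) : ℚ) : ℝ) * z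
        = (if z ∈ s then (cs z : ℝ) * z else 0) + (if z ∈ t then (ct z : ℝ) * z else 0) := by
      intro z _
      by_cases h1 : z ∈ s <;> by_cases h2 : z ∈ t <;>
        simp [h1, h2, add_mul] <;> push_cast <;> ring
    rw [Finset.sum_congr rfl h1, Finset.sum_add_distrib,
        Finset.sum_ite_mem, Finset.sum_ite_mem,
        Finset.union_inter_cancel_left, Finset.union_inter_cancel_right, ← hxe, ← hye, hxy]
    simp
  obtain ⟨hst, hco⟩ := rep_unique hBind
      (by rw [Finset.coe_union]; exact Set.union_subset hsB htB) (by simpa using hu)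
      hepos (fun z _ => hp) hsum
  have hs_sub : s ⊆ ({u} : Finset ℝ) := by rw [← hst]; exact Finset.subset_union_left
  have ht_sub : t ⊆ ({u} : Finset ℝ) := by rw [← hst]; exact Finset.subset_union_right
  have hs_eq : s = {u} := by
    rcases Finset.subset_singleton_iff.mp hs_sub with h | h
    · exact absurd h (Finset.nonempty_iff_ne_empty.mp hsne)
    · exact h
  have ht_eq : t = {u} := by
    rcases Finset.subset_singleton_iff.mp ht_sub with h | h
    · exact absurd h (Finset.nonempty_iff_ne_empty.mp htne)
    · exact h
  have hus : u ∈ s := hs_eq ▸ Finset.mem_singleton_self u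
  have hut : u ∈ t := ht_eq ▸ Finset.mem_singleton_self u
  refine ⟨cs u, ct u, hcs u hus, hct u hut, ?_, ?_, ?_⟩
  · have := hco u (by rw [hst]; exact Finset.mem_singleton_self u)
    simpa [hus, hut] using this
  · rw [hxe, hs_eq, Finset.sum_singleton]
  · rw [hye, ht_eq, Finset.sum_singleton]

set_option maxHeartbeats 2000000 in
theorem exists_subadditive_bijection_on_cone
    (B : Set ℝ) (hB : B ⊆ Set.Ioi 0) (hBinf : B.Infinite)
    (hBind : LinearIndependent ℚ ((↑) : B → ℝ))
    (H : Set ℝ)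
    (hH : H = {x : ℝ | ∃ s : Finset ℝ, ↑s ⊆ B ∧ s.Nonempty ∧
      ∃ c : ℝ → ℚ, (∀ b ∈ s, 0 < c b) ∧ x = ∑ b ∈ s, (c b : ℝ) * b}) :
    ∃ f : ℝ → ℝ, Set.BijOn f H H ∧
      (∀ x ∈ H, ∀ y ∈ H, f (x + y) ≤ f x + f y) ∧
      Filter.liminf f (nhdsWithin 0 H) = 0 ∧
      Filter.limsup f (nhdsWithin 0 H) = 1 := by
  classical
  -- basic facts about H
  have hHmem : ∀ (q : ℚ), 0 < q → ∀ u, u ∈ B → (q : ℝ) * u ∈ H := by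
    intro q hq u hu
    rw [hH]
    exact ⟨{u}, by simpa using hu, Finset.singleton_nonempty u, fun _ => q,
      fun _ _ => hq, by simp⟩
  have hHpos : ∀ x, x ∈ H → 0 < x := by
    intro x hx
    rw [hH] at hx
    obtain ⟨s, hsB, hsne, cc, hcc, rfl⟩ := hx
    refine Finset.sum_pos (fun i hi => ?_) hsne
    exact mul_pos (by exact_mod_cast hcc i hi) (hB (hsB hi))
  -- a ℤ-indexed chain in B
  set E := hBinf.natEmbedding with hEdef
  set b : ℤ → ℝ := fun k => ((E ((Denumerable.eqv ℤ) k)) : ℝ) with hbdef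
  have hbB : ∀ k, b k ∈ B := fun k => (E ((Denumerable.eqv ℤ) k)).2
  have hbinj : Function.Injective b := by
    intro k j hkj
    exact (Denumerable.eqv ℤ).injective (E.injective (Subtype.coe_injective hkj))
  have hbpos : ∀ k, 0 < b k := fun k => Set.mem_Ioi.mp (hB (hbB k))
  -- parameters
  set θ : ℤ → ℝ := fun k => 1 / ((k.natAbs : ℝ) + 2) with hθdef
  have hθpos : ∀ k, 0 < θ k := fun k => by
    rw [hθdef]; positivity
  have hθlt : ∀ k, θ k < 1 := by
    intro k; rw [hθdef]
    rw [div_lt_one (by positivity)]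
    have : (0:ℝ) ≤ (k.natAbs : ℝ) := Nat.cast_nonneg _
    linarith
  choose μ hμl hμr using fun k : ℤ =>
    exists_rat_btwn (show b k / b (k+1) < 2 * (b k / b (k+1)) by
      have : 0 < b k / b (k+1) := div_pos (hbpos k) (hbpos (k+1)); linarith)
  have hμpos : ∀ k, (0:ℝ) < μ k := fun k =>
    lt_trans (div_pos (hbpos k) (hbpos (k+1))) (hμl k)
  have hμQ0 : ∀ k, 0 < μ k := fun k => by exact_mod_cast hμpos k
  choose c hcl hcr using fun k : ℤ =>
    exists_rat_btwn (show (0:ℝ) < min (θ k / b k) ((1 - θ k) / ((μ k : ℝ) * b (k+1))) by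
      apply lt_min
      · exact div_pos (hθpos k) (hbpos k)
      · exact div_pos (by linarith [hθlt k]) (mul_pos (hμpos k) (hbpos (k+1))))
  have hcpos : ∀ k, (0:ℝ) < c k := fun k => hcl k
  have hcQ0 : ∀ k, 0 < c k := fun k => by exact_mod_cast hcpos k
  have hcb_lt_θ : ∀ k, (c k : ℝ) * b k < θ k := by
    intro k
    have h1 : (c k : ℝ) < θ k / b k := lt_of_lt_of_le (hcr k) (min_le_left _ _)
    exact (lt_div_iff₀ (hbpos k)).mp h1
  have hμcb : ∀ k, (μ k : ℝ) * ((c k : ℝ) * b (k+1)) < 1 - θ k := by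
    intro k
    have h1 : (c k : ℝ) < (1 - θ k) / ((μ k : ℝ) * b (k+1)) :=
      lt_of_lt_of_le (hcr k) (min_le_right _ _)
    have h2 := (lt_div_iff₀ (mul_pos (hμpos k) (hbpos (k+1)))).mp h1
    calc (μ k : ℝ) * ((c k : ℝ) * b (k+1)) = (c k : ℝ) * ((μ k : ℝ) * b (k+1)) := by ring
      _ < 1 - θ k := h2
  have hcb_pos : ∀ k, (0:ℝ) < (c k : ℝ) * b (k+1) := fun k => mul_pos (hcpos k) (hbpos (k+1))
  choose γ hγl hγr using fun k : ℤ =>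
    exists_rat_btwn (show (1 - θ k) / ((c k : ℝ) * b (k+1)) < 1 / ((c k : ℝ) * b (k+1)) by
      have := hcb_pos k
      rw [div_lt_div_iff₀ this this]
      nlinarith [hθpos k])
  have hspike1 : ∀ k, 1 - θ k < (γ k : ℝ) * ((c k : ℝ) * b (k+1)) :=
    fun k => (div_lt_iff₀ (hcb_pos k)).mp (hγl k)
  have hspike2 : ∀ k, (γ k : ℝ) * ((c k : ℝ) * b (k+1)) < 1 :=
    fun k => (lt_div_iff₀ (hcb_pos k)).mp (hγr k)
  have hμγ : ∀ k, (μ k : ℝ) < γ k := by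
    intro k
    have h1 := hμcb k
    have h2 := hspike1 k
    have h3 : (μ k : ℝ) * ((c k : ℝ) * b (k+1)) < (γ k : ℝ) * ((c k : ℝ) * b (k+1)) := by
      linarith
    exact lt_of_mul_lt_mul_right h3 (hcb_pos k).le
  have hμγQ : ∀ k, μ k < γ k := fun k => by exact_mod_cast hμγ k
  have hγQ0 : ∀ k, 0 < γ k := fun k => lt_trans (hμQ0 k) (hμγQ k)
  have hγpos : ∀ k, (0:ℝ) < γ k := fun k => by exact_mod_cast hγQ0 k
  set Sq : ℤ → ℚ := fun k => (γ k - μ k) * c k with hSqdef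
  have hSq0 : ∀ k, 0 ≤ Sq k := fun k => by
    rw [hSqdef]
    exact mul_nonneg (by linarith [hμγQ k]) (hcQ0 k).le
  have hSqc : ∀ k, Sq k = γ k * c k - μ k * c k := fun k => by rw [hSqdef]; ring
  set ψ : ℤ → ℚ → ℚ := fun k q => if q ≤ c k then γ k * q else μ k * q + Sq k with hψdef
  have hψlow : ∀ k q, q ≤ c k → ψ k q = γ k * q := by
    intro k q hq; simp only [hψdef]; rw [if_pos hq]
  have hψhigh : ∀ k q, ¬(q ≤ c k) → ψ k q = μ k * q + Sq k := by
    intro k q hq; simp only [hψdef]; rw [if_neg hq]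
  have hψpos : ∀ k q, 0 < q → 0 < ψ k q := by
    intro k q hq
    by_cases hqc : q ≤ c k
    · rw [hψlow k q hqc]; exact mul_pos (hγQ0 k) hq
    · rw [hψhigh k q hqc]
      have := mul_pos (hμQ0 k) hq
      linarith [hSq0 k]
  have hψgeμ : ∀ k q, 0 < q → μ k * q ≤ ψ k q := by
    intro k q hq
    by_cases hqc : q ≤ c k
    · rw [hψlow k q hqc]
      nlinarith [mul_nonneg (sub_nonneg.mpr (hμγQ k).le) hq.le]
    · rw [hψhigh k q hqc]; linarith [hSq0 k]
  have hψsub : ∀ k qx qy, 0 < qx → 0 < qy → ψ k (qx + qy) ≤ ψ k qx + ψ k qy := by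
    intro k qx qy hqx hqy
    by_cases hA : qx + qy ≤ c k
    · have hBx : qx ≤ c k := by linarith
      have hBy : qy ≤ c k := by linarith
      rw [hψlow _ _ hA, hψlow _ _ hBx, hψlow _ _ hBy, mul_add]
    · rw [hψhigh _ _ hA]
      by_cases hBx : qx ≤ c k
      · by_cases hBy : qy ≤ c k
        · rw [hψlow _ _ hBx, hψlow _ _ hBy]
          have key : 0 ≤ (γ k - μ k) * (qx + qy - c k) :=
            mul_nonneg (by linarith [hμγQ k]) (by linarith [not_le.mp hA])
          rw [hSqc]
          nlinarith [key]
        · rw [hψhigh _ _ hBy, mul_add]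
          linarith [hψgeμ k qx hqx, hψlow k qx hBx ▸ hψgeμ k qx hqx]
      · rw [hψhigh _ _ hBx, mul_add]
        linarith [hψgeμ k qy hqy]
  have hψinj : ∀ k q q', 0 < q → 0 < q' → ψ k q = ψ k q' → q = q' := by
    intro k q q' hq hq' heq
    by_cases h1 : q ≤ c k <;> by_cases h2 : q' ≤ c k
    · rw [hψlow _ _ h1, hψlow _ _ h2] at heq
      exact mul_left_cancel₀ (hγQ0 k).ne' heq
    · exfalso
      rw [hψlow _ _ h1, hψhigh _ _ h2] at heq
      have e1 : γ k * q ≤ γ k * c k := mul_le_mul_of_nonneg_left h1 (hγQ0 k).le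
      have e2 : μ k * c k < μ k * q' := mul_lt_mul_of_pos_left (not_le.mp h2) (hμQ0 k)
      have e3 := hSqc k
      linarith
    · exfalso
      rw [hψhigh _ _ h1, hψlow _ _ h2] at heq
      have e1 : γ k * q' ≤ γ k * c k := mul_le_mul_of_nonneg_left h2 (hγQ0 k).le
      have e2 : μ k * c k < μ k * q := mul_lt_mul_of_pos_left (not_le.mp h1) (hμQ0 k)
      have e3 := hSqc k
      linarith
    · rw [hψhigh _ _ h1, hψhigh _ _ h2] at heq
      have : μ k * q = μ k * q' := by linarith
      exact mul_left_cancel₀ (hμQ0 k).ne' this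
  -- real bound : f ≥ id on rays
  have hψger : ∀ k (q : ℚ), 0 < q → (q : ℝ) * b k ≤ (ψ k q : ℝ) * b (k+1) := by
    intro k q hq
    have hq' : (0:ℝ) < q := by exact_mod_cast hq
    have h1 : b k < (μ k : ℝ) * b (k+1) := by
      have := hμl k
      rw [div_lt_iff₀ (hbpos (k+1))] at this
      linarith
    have h2 : (μ k : ℝ) * q ≤ (ψ k q : ℝ) := by exact_mod_cast hψgeμ k q hq
    have h3 : (q : ℝ) * b k ≤ (q : ℝ) * ((μ k : ℝ) * b (k+1)) :=
      mul_le_mul_of_nonneg_left h1.le hq'.le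
    have h4 : (μ k : ℝ) * q * b (k+1) ≤ (ψ k q : ℝ) * b (k+1) :=
      mul_le_mul_of_nonneg_right h2 (hbpos (k+1)).le
    nlinarith [h3, h4]
  -- the function
  set f : ℝ → ℝ := fun x =>
    if h : ∃ pp : ℤ × ℚ, 0 < pp.2 ∧ x = (pp.2 : ℝ) * b pp.1 then
      ((ψ h.choose.1 h.choose.2 : ℚ) : ℝ) * b (h.choose.1 + 1)
    else x with hfdef
  have hfS : ∀ (k : ℤ) (q : ℚ), 0 < q → f ((q : ℝ) * b k) = ((ψ k q : ℚ) : ℝ) * b (k+1) := by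
    intro k q hq
    have hmem : ∃ pp : ℤ × ℚ, 0 < pp.2 ∧ (q : ℝ) * b k = (pp.2 : ℝ) * b pp.1 := ⟨(k, q), hq, rfl⟩
    simp only [hfdef]
    rw [dif_pos hmem]
    obtain ⟨h1, h2⟩ := hmem.choose_spec
    obtain ⟨hb_eq, hq_eq⟩ := ray_unique hBind (hbB k) (hbB hmem.choose.1) hq h1 h2
    have hk : hmem.choose.1 = k := (hbinj hb_eq).symm
    rw [hk, ← hq_eq]
  have hfnot : ∀ x, (¬ ∃ pp : ℤ × ℚ, 0 < pp.2 ∧ x = (pp.2 : ℝ) * b pp.1) → f x = x := by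
    intro x hx
    simp only [hfdef]
    rw [dif_neg hx]
  -- f ≥ id on H
  have hfge : ∀ x, x ∈ H → x ≤ f x := by
    intro x hx
    by_cases hxS : ∃ pp : ℤ × ℚ, 0 < pp.2 ∧ x = (pp.2 : ℝ) * b pp.1
    · obtain ⟨⟨k, q⟩, hq, rfl⟩ := hxS
      rw [hfS k q hq]
      exact hψger k q hq
    · rw [hfnot x hxS]
  -- upper bound
  have hfub : ∀ x, x ∈ H → f x ≤ 2 * x + 1 := by
    intro x hx
    have hx0 : 0 < x := hHpos x hx
    by_cases hxS : ∃ pp : ℤ × ℚ, 0 < pp.2 ∧ x = (pp.2 : ℝ) * b pp.1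
    · obtain ⟨⟨k, q⟩, hq, rfl⟩ := hxS
      rw [hfS k q hq]
      have hq' : (0:ℝ) < q := by exact_mod_cast hq
      by_cases hqc : q ≤ c k
      · rw [hψlow k q hqc]
        have hqc' : (q : ℝ) ≤ c k := by exact_mod_cast hqc
        push_cast
        have h1 : (γ k : ℝ) * (q : ℝ) * b (k+1) ≤ (γ k : ℝ) * ((c k : ℝ) * b (k+1)) := by
          nlinarith [mul_nonneg (mul_nonneg (hγpos k).le (sub_nonneg.mpr hqc')) (hbpos (k+1)).le]
        have h2 := hspike2 k
        nlinarith [hx0]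
      · rw [hψhigh k q hqc]
        push_cast
        have hSq' : (Sq k : ℝ) = ((γ k : ℝ) - μ k) * c k := by rw [hSqdef]; push_cast; ring
        have hμb : (μ k : ℝ) * b (k+1) < 2 * b k := by
          have h5 := hμr k
          rw [show 2 * (b k / b (k+1)) = 2 * b k / b (k+1) by ring,
            lt_div_iff₀ (hbpos (k+1))] at h5
          linarith
        have h2 : (μ k : ℝ) * q * b (k+1) ≤ 2 * ((q : ℝ) * b k) := by nlinarith [hq']
        have h3 : (Sq k : ℝ) * b (k+1) < 1 := by
          rw [hSq']
          have h6 := hspike2 k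
          have h7 : 0 ≤ (μ k : ℝ) * ((c k : ℝ) * b (k+1)) :=
            mul_nonneg (hμpos k).le (hcb_pos k).le
          nlinarith
        nlinarith [h2, h3]
    · rw [hfnot x hxS]
      linarith
  -- subadditivity
  have hsubadd : ∀ x ∈ H, ∀ y ∈ H, f (x + y) ≤ f x + f y := by
    intro x hx y hy
    by_cases hxy : ∃ pp : ℤ × ℚ, 0 < pp.2 ∧ x + y = (pp.2 : ℝ) * b pp.1
    · obtain ⟨⟨j, p⟩, hp, hpe⟩ := hxy
      have hx' := hx; have hy' := hy
      rw [hH] at hx' hy'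
      obtain ⟨qx, qy, hqx, hqy, hqsum, hxe, hye⟩ := sum_ray hBind hx' hy' (hbB j) hp hpe
      rw [hpe, hxe, hye, hfS j p hp, hfS j qx hqx, hfS j qy hqy]
      have hkey := hψsub j qx qy hqx hqy
      rw [hqsum] at hkey
      have hkey' : ((ψ j p : ℚ) : ℝ) ≤ ((ψ j qx : ℚ) : ℝ) + ((ψ j qy : ℚ) : ℝ) := by
        exact_mod_cast hkey
      nlinarith [hbpos (j+1), mul_le_mul_of_nonneg_right hkey' (hbpos (j+1)).le]
    · rw [hfnot _ hxy]
      have h1 := hfge x hx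
      have h2 := hfge y hy
      linarith
  -- bijectivity pieces
  have hmaps : Set.MapsTo f H H := by
    intro x hx
    by_cases hxS : ∃ pp : ℤ × ℚ, 0 < pp.2 ∧ x = (pp.2 : ℝ) * b pp.1
    · obtain ⟨⟨k, q⟩, hq, rfl⟩ := hxS
      rw [hfS k q hq]
      exact hHmem _ (hψpos k q hq) _ (hbB (k+1))
    · rw [hfnot x hxS]; exact hx
  have hinj : Set.InjOn f H := by
    intro x hx y hy hfeq
    by_cases hxS : ∃ pp : ℤ × ℚ, 0 < pp.2 ∧ x = (pp.2 : ℝ) * b pp.1 <;>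
      by_cases hyS : ∃ pp : ℤ × ℚ, 0 < pp.2 ∧ y = (pp.2 : ℝ) * b pp.1
    · obtain ⟨⟨k, qx⟩, hqx, rfl⟩ := hxS
      obtain ⟨⟨j, qy⟩, hqy, rfl⟩ := hyS
      rw [hfS k qx hqx, hfS j qy hqy] at hfeq
      obtain ⟨hb_eq, hψeq⟩ := ray_unique hBind (hbB (k+1)) (hbB (j+1))
        (hψpos k qx hqx) (hψpos j qy hqy) hfeq
      have hkj : k = j := by
        have := hbinj hb_eq; omega
      subst hkj
      rw [hψinj k qx qy hqx hqy hψeq]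
    · exfalso
      rw [hfnot y hyS] at hfeq
      obtain ⟨⟨k, qx⟩, hqx, rfl⟩ := hxS
      rw [hfS k qx hqx] at hfeq
      exact hyS ⟨(k+1, ψ k qx), hψpos k qx hqx, hfeq.symm⟩
    · exfalso
      rw [hfnot x hxS] at hfeq
      obtain ⟨⟨k, qy⟩, hqy, rfl⟩ := hyS
      rw [hfS k qy hqy] at hfeq
      exact hxS ⟨(k+1, ψ k qy), hψpos k qy hqy, hfeq⟩
    · rw [hfnot x hxS, hfnot y hyS] at hfeq
      exact hfeq
  have hsurj : Set.SurjOn f H H := by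
    intro y hy
    by_cases hyS : ∃ pp : ℤ × ℚ, 0 < pp.2 ∧ y = (pp.2 : ℝ) * b pp.1
    · obtain ⟨⟨j, p⟩, hp, rfl⟩ := hyS
      have hk1 : (j - 1) + 1 = j := by omega
      by_cases hcase : p ≤ γ (j-1) * c (j-1)
      · have hq0 : 0 < p / γ (j-1) := div_pos hp (hγQ0 _)
        refine ⟨((p / γ (j-1) : ℚ) : ℝ) * b (j-1), hHmem _ hq0 _ (hbB _), ?_⟩
        rw [hfS _ _ hq0]
        have hle : p / γ (j-1) ≤ c (j-1) := by
          rw [div_le_iff₀ (hγQ0 _)]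
          calc p ≤ γ (j-1) * c (j-1) := hcase
            _ = c (j-1) * γ (j-1) := by ring
        have hv : ψ (j-1) (p / γ (j-1)) = p := by
          rw [hψlow _ _ hle]
          field_simp
          exact div_self (hγQ0 (j-1)).ne'
        rw [hv, hk1]
      · have hnum : 0 < p - Sq (j-1) := by
          have h1 := hSqc (j-1)
          have h2 := mul_pos (hμQ0 (j-1)) (hcQ0 (j-1))
          have h3 := not_le.mp hcase
          linarith
        have hq0 : 0 < (p - Sq (j-1)) / μ (j-1) := div_pos hnum (hμQ0 _)
        refine ⟨(((p - Sq (j-1)) / μ (j-1) : ℚ) : ℝ) * b (j-1), hHmem _ hq0 _ (hbB _), ?_⟩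
        rw [hfS _ _ hq0]
        have hgt : ¬((p - Sq (j-1)) / μ (j-1) ≤ c (j-1)) := by
          rw [not_le, lt_div_iff₀ (hμQ0 _)]
          have h1 := hSqc (j-1)
          have h3 := not_le.mp hcase
          nlinarith
        have hv : ψ (j-1) ((p - Sq (j-1)) / μ (j-1)) = p := by
          rw [hψhigh _ _ hgt]
          field_simp
          rw [mul_div_cancel_left₀ _ (hμQ0 (j-1)).ne']
          ring
        rw [hv, hk1]
    · exact ⟨y, hy, hfnot y hyS⟩
  -- the liminf witness sequence
  have hylimq : ∀ n : ℕ, 0 < c 0 / ((n : ℚ) + 1) := fun n => div_pos (hcQ0 0) (by positivity)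
  set ylim : ℕ → ℝ := fun n => ((c 0 / ((n : ℚ) + 1) : ℚ) : ℝ) * b 0 with hylimdef
  have hylimH : ∀ n, ylim n ∈ H := fun n => hHmem _ (hylimq n) _ (hbB 0)
  have hylim0 : Tendsto ylim atTop (𝓝 0) := by
    have h1 : Tendsto (fun n : ℕ => ((c 0 : ℝ) * b 0) * (1 / ((n : ℝ) + 1))) atTop (𝓝 0) := by
      have h2 := tendsto_one_div_add_atTop_nhds_zero_nat.const_mul ((c 0 : ℝ) * b 0)
      simpa using h2
    refine h1.congr fun n => ?_
    simp only [hylimdef]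
    push_cast
    ring
  have hylimW : Tendsto ylim atTop (𝓝[H] 0) :=
    tendsto_nhdsWithin_of_tendsto_nhds_of_eventually_within _ hylim0
      (Eventually.of_forall hylimH)
  haveI hmapNB : (Filter.map ylim atTop).NeBot := Filter.map_neBot
  haveI hNB : (𝓝[H] (0:ℝ)).NeBot := neBot_of_le hylimW
  have hfylim : ∀ n : ℕ, f (ylim n) ≤ 1 / ((n : ℝ) + 1) := by
    intro n
    simp only [hylimdef]
    rw [hfS 0 _ (hylimq n)]
    have hle : c 0 / ((n : ℚ) + 1) ≤ c 0 := by
      apply div_le_self (hcQ0 0).le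
      have : (0:ℚ) ≤ (n : ℚ) := by positivity
      linarith
    rw [hψlow _ _ hle]
    have hn : (0:ℝ) < (n : ℝ) + 1 := by positivity
    have heq : ((γ 0 * (c 0 / ((n : ℚ) + 1)) : ℚ) : ℝ) * b (0+1)
        = ((γ 0 : ℝ) * ((c 0 : ℝ) * b (0+1))) / ((n : ℝ) + 1) := by
      push_cast
      field_simp
    rw [heq]
    have h2 := hspike2 0
    rw [div_le_div_iff₀ hn hn]
    nlinarith
  -- eventual bounds near 0
  have hsmall : ∀ ε : ℝ, 0 < ε → ∀ᶠ x in 𝓝[H] (0:ℝ), x < ε := by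
    intro ε hε
    have h0 : ∀ᶠ x in 𝓝 (0:ℝ), x < ε := by
      filter_upwards [Iio_mem_nhds hε] with x hx
      exact hx
    exact h0.filter_mono nhdsWithin_le_nhds
  have hmemH : ∀ᶠ x in 𝓝[H] (0:ℝ), x ∈ H := self_mem_nhdsWithin
  have hev0 : ∀ᶠ x in 𝓝[H] (0:ℝ), (0:ℝ) ≤ f x := by
    filter_upwards [hmemH] with x hx
    exact le_trans (hHpos x hx).le (hfge x hx)
  have hev3 : ∀ᶠ x in 𝓝[H] (0:ℝ), f x ≤ 3 := by
    filter_upwards [hmemH, hsmall 1 one_pos] with x hx hx1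
    have := hfub x hx
    linarith
  have hBA : IsBoundedUnder (· ≤ ·) (𝓝[H] (0:ℝ)) f := ⟨3, by simpa using hev3⟩
  have hBB : IsBoundedUnder (· ≥ ·) (𝓝[H] (0:ℝ)) f := ⟨0, by simpa using hev0⟩
  -- liminf = 0
  have hliminf : liminf f (𝓝[H] (0:ℝ)) = 0 := by
    have hge : (0:ℝ) ≤ liminf f (𝓝[H] (0:ℝ)) := le_liminf_of_le hBA.isCoboundedUnder_ge hev0
    have hle : liminf f (𝓝[H] (0:ℝ)) ≤ 0 := by
      have key : ∀ ε : ℝ, 0 < ε → liminf f (𝓝[H] (0:ℝ)) ≤ ε := by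
        intro ε hε
        apply liminf_le_of_frequently_le _ hBB
        apply hylimW.frequently
        apply Eventually.frequently
        obtain ⟨N, hN⟩ := exists_nat_gt (1/ε)
        filter_upwards [eventually_ge_atTop N] with n hn
        have h1 := hfylim n
        have hNn : (N : ℝ) ≤ n := by exact_mod_cast hn
        have h2 : 1 / ((n : ℝ) + 1) ≤ ε := by
          rw [div_le_iff₀ (by positivity)]
          rw [div_lt_iff₀ hε] at hN
          nlinarith
        linarith
      by_contra hcon
      push_neg at hcon
      have := key (liminf f (𝓝[H] (0:ℝ)) / 2) (by linarith)
      linarith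
    linarith
  -- the limsup witness sequence
  set zs : ℕ → ℝ := fun n => ((c (n : ℤ) : ℚ) : ℝ) * b (n : ℤ) with hzsdef
  have hzsH : ∀ n, zs n ∈ H := fun n => hHmem _ (hcQ0 _) _ (hbB _)
  have hzspos : ∀ n, 0 < zs n := fun n => mul_pos (hcpos _) (hbpos _)
  have hzsub : ∀ n : ℕ, zs n < 1 / ((n : ℝ) + 2) := by
    intro n
    have h1 := hcb_lt_θ (n : ℤ)
    rw [hθdef] at h1
    simpa using h1
  have hzs0 : Tendsto zs atTop (𝓝 0) := by
    have hb2 : Tendsto (fun n : ℕ => 1 / ((n : ℝ) + 2)) atTop (𝓝 0) := by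
      have h1 := (tendsto_one_div_add_atTop_nhds_zero_nat (𝕜 := ℝ)).comp (tendsto_add_atTop_nat 1)
      refine h1.congr fun n => ?_
      simp only [Function.comp]
      push_cast
      ring_nf
    exact squeeze_zero (fun n => (hzspos n).le) (fun n => (hzsub n).le) hb2
  have hzsW : Tendsto zs atTop (𝓝[H] 0) :=
    tendsto_nhdsWithin_of_tendsto_nhds_of_eventually_within _ hzs0
      (Eventually.of_forall hzsH)
  have hfzs : ∀ n : ℕ, 1 - 1 / ((n : ℝ) + 2) < f (zs n) := by
    intro n
    simp only [hzsdef]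
    rw [hfS _ _ (hcQ0 (n : ℤ))]
    rw [hψlow _ _ le_rfl]
    have h1 := hspike1 (n : ℤ)
    rw [hθdef] at h1
    simp only [Int.natAbs_natCast] at h1
    push_cast at h1 ⊢
    nlinarith [h1]
  -- limsup = 1
  have hlimsup : limsup f (𝓝[H] (0:ℝ)) = 1 := by
    have hle : limsup f (𝓝[H] (0:ℝ)) ≤ 1 := by
      refine le_of_forall_pos_le_add fun ε hε => ?_
      apply limsup_le_of_le hBB.isCoboundedUnder_le
      filter_upwards [hmemH, hsmall (ε/2) (by linarith)] with x hx hxs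
      have := hfub x hx
      linarith
    have hge : (1:ℝ) ≤ limsup f (𝓝[H] (0:ℝ)) := by
      refine le_of_forall_pos_le_add fun ε hε => ?_
      have hf : ∃ᶠ x in 𝓝[H] (0:ℝ), 1 - ε ≤ f x := by
        apply hzsW.frequently
        apply Eventually.frequently
        obtain ⟨N, hN⟩ := exists_nat_gt (1/ε)
        filter_upwards [eventually_ge_atTop N] with n hn
        have h1 := hfzs n
        have hNn : (N : ℝ) ≤ n := by exact_mod_cast hn
        have h2 : 1 / ((n : ℝ) + 2) ≤ ε := by
          rw [div_le_iff₀ (by positivity)]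
          rw [div_lt_iff₀ hε] at hN
          nlinarith
        linarith
      have := le_limsup_of_frequently_le hf hBA
      linarith
    linarith
  exact ⟨f, ⟨hmaps, hinj, hsurj⟩, hsubadd, hliminf, hlimsup⟩
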